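/- Let M N : ℕ, let p : Fin M → Fin N → ℝ be parameter vectors, let L : (Fin M → Fin N) → ℝ be a loss function, and fix i : Fin M and a : Fin N with p i a ≠ 0. Define F : ℝ → ℝ by F(t) = ∑ over all j : Fin M → Fin N of L(j) · ∏ over m : Fin M of q m (j m), where q = Function.update p i (Function.update (p i) a t) (i.e. the family p with its (i,a)-entry replaced by t). Then F has derivative at the point t = p i a equal to ∑ over all j : Fin M → Fin N of L(j) · (∏ over m of p m (j m)) · (if j i = a then (p i a)⁻¹ else 0). -/

import Mathlib

theorem stmt_6 (M N : ℕ) (p : Fin M → Fin N → ℝ)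
    (L : (Fin M → Fin N) → ℝ) (i : Fin M) (a : Fin N) (hpa : p i a ≠ 0) :
    HasDerivAt
      (fun t : ℝ => ∑ j : Fin M → Fin N,
        L j * ∏ m, (Function.update p i (Function.update (p i) a t)) m (j m))
      (∑ j : Fin M → Fin N,
        L j * (∏ m, p m (j m)) * (if j i = a then (p i a)⁻¹ else 0))
      (p i a) := by
  apply HasDerivAt.fun_sum
  intro j _
  set C : ℝ := ∏ m ∈ Finset.univ.erase i, p m (j m) with hCdef
  have hC : ∀ t : ℝ, (∏ m, (Function.update p i (Function.update (p i) a t)) m (j m))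
      = (if j i = a then t else p i (j i)) * C := by
    intro t
    rw [← Finset.mul_prod_erase Finset.univ _ (Finset.mem_univ i)]
    congr 1
    · rw [Function.update_self, Function.update]
      split <;> simp_all
    · exact Finset.prod_congr rfl fun m hm => by
        rw [Function.update_of_ne (Finset.ne_of_mem_erase hm)]
  simp only [hC]
  have hfull : (∏ m, p m (j m)) = p i (j i) * C :=
    (Finset.mul_prod_erase Finset.univ _ (Finset.mem_univ i)).symm
  by_cases h : j i = a
  · simp only [h, if_true]
    have heq : L j * (∏ m, p m (j m)) * (p i a)⁻¹ = L j * C := by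
      rw [hfull, h]; field_simp
    rw [heq]
    have : HasDerivAt (fun t : ℝ => L j * (t * C)) (L j * (1 * C)) (p i a) :=
      ((hasDerivAt_id (p i a)).mul_const C).const_mul (L j)
    simpa using this
  · simp only [h, if_neg h, if_false, mul_zero]
    exact hasDerivAt_const _ _
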